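/- Let B ⊆ M = {f_1,...,f_{4m+2}} ⊂ R^{2m+1} (M as above) be a basis of R^{2m+1}. Then B can be ordered as f_{j_1},...,f_{j_{2m+1}} by the following greedy procedure, and the procedure succeeds in exhausting B: f_{j_1} is the first of e_1, e_1 − e_2, e_1 − e_2 + ⋯ + e_{2m+1} that lies in B, and given f_{j_1},...,f_{j_k}, f_{j_{k+1}} is the first of e_k − e_{k+1}, e_{k+1}, e_{k+1} − e_{k+2}, e_1 − e_2 + ⋯ + e_{2m+1} lying in B ∖ {f_{j_1},...,f_{j_k}}. -/

import Mathlib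

open Finset

noncomputable def nbM (m : ℕ) (i : Fin (4*m+2)) : Fin (2*m+1) → ℝ :=
  if i.val = 4*m+1 then fun t => (-1 : ℝ) ^ (t : ℕ)
  else if i.val % 2 = 0 then
    fun t => if t.val = i.val / 2 then 1 else 0
  else
    fun t => if t.val = i.val / 2 then 1 else if t.val = i.val / 2 + 1 then -1 else 0

/-- The priority list (of 0-based indices into `M`) at step `r` (0-based) of the greedy
procedure: at step `0` the list `e_1, e_1-e_2, f_{4m+2}` (indices `0, 1, 4m+1`), and at step
`r ≥ 1` the list `e_r - e_{r+1}, e_{r+1}, e_{r+1} - e_{r+2}, f_{4m+2}`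
(indices `2r-1, 2r, 2r+1, 4m+1`). -/
def priority (m r : ℕ) : List ℕ :=
  if r = 0 then [0, 1, 4*m+1] else [2*r-1, 2*r, 2*r+1, 4*m+1]

section aux

lemma nbM_even {m : ℕ} (i : Fin (4*m+2)) (k : ℕ) (h : i.val = 2*k) :
    nbM m i = fun τ : Fin (2*m+1) => if τ.val = k then (1:ℝ) else 0 := by
  have h1 : ¬ i.val = 4*m+1 := by omega
  have h2 : i.val % 2 = 0 := by omega
  have h3 : i.val / 2 = k := by omega
  unfold nbM
  rw [if_neg h1, if_pos h2, h3]

lemma nbM_odd {m : ℕ} (i : Fin (4*m+2)) (k : ℕ) (h : i.val = 2*k+1) (hk : k < 2*m) :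
    nbM m i = fun τ : Fin (2*m+1) =>
      if τ.val = k then (1:ℝ) else if τ.val = k+1 then -1 else 0 := by
  have h1 : ¬ i.val = 4*m+1 := by omega
  have h2 : ¬ i.val % 2 = 0 := by omega
  have h3 : i.val / 2 = k := by omega
  unfold nbM
  rw [if_neg h1, if_neg h2, h3]

lemma not_mem_span_lt {m : ℕ} {B : Finset (Fin (4*m+2))}
    (hindep : LinearIndependent ℝ (fun i : {i // i ∈ B} => nbM m i))
    (n : ℕ) (j : Fin (4*m+2)) (hj : j ∈ B) (hn : n ≤ j.val) :
    nbM m j ∉ Submodule.span ℝ (nbM m '' {i : Fin (4*m+2) | i ∈ B ∧ i.val < n}) := by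
  have himg : nbM m '' {i : Fin (4*m+2) | i ∈ B ∧ i.val < n}
      = (fun x : {i // i ∈ B} => nbM m x) '' {x : {i // i ∈ B} | x.val.val < n} := by
    ext y
    constructor
    · rintro ⟨x, ⟨hxB, hxn⟩, rfl⟩; exact ⟨⟨x, hxB⟩, hxn, rfl⟩
    · rintro ⟨x, hxn, rfl⟩; exact ⟨x.val, ⟨x.2, hxn⟩, rfl⟩
  rw [himg]
  exact hindep.notMem_span_image (x := ⟨j, hj⟩)
    (by simp only [Set.mem_setOf_eq]; omega)

lemma card_le_aux {m : ℕ} {B : Finset (Fin (4*m+2))}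
    (hindep : LinearIndependent ℝ (fun i : {i // i ∈ B} => nbM m i)) :
    B.card ≤ 2*m+1 := by
  have h := hindep.fintype_card_le_finrank
  simpa [Module.finrank_fintype_fun_eq_card] using h

lemma avail_aux {m : ℕ} {B : Finset (Fin (4*m+2))}
    (hspan : Submodule.span ℝ (nbM m '' (B : Set (Fin (4*m+2)))) = ⊤)
    (k : ℕ) (hk : k ≤ 2*m) :
    k+1 ≤ (B.filter (fun i => i.val ≤ 2*k+1 ∨ i.val = 4*m+1)).card := by
  classical
  set S := B.filter (fun i => i.val ≤ 2*k+1 ∨ i.val = 4*m+1) with hS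
  set π := LinearMap.funLeft ℝ ℝ (Fin.castLE (by omega : k+1 ≤ 2*m+1)) with hπ
  have hsurj : Function.Surjective π :=
    LinearMap.funLeft_surjective_of_injective _ _ _ (Fin.castLE_injective _)
  have h1 : Submodule.span ℝ (π '' (nbM m '' (B : Set (Fin (4*m+2))))) = ⊤ := by
    rw [Submodule.span_image, hspan, Submodule.map_top, LinearMap.range_eq_top]
    exact hsurj
  have hzero : ∀ i : Fin (4*m+2), i ∈ B → i ∉ S → π (nbM m i) = 0 := by
    intro i hiB hiS
    have hi : ¬(i.val ≤ 2*k+1 ∨ i.val = 4*m+1) := fun h => hiS (Finset.mem_filter.mpr ⟨hiB, h⟩)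
    push_neg at hi
    funext t
    show nbM m i (Fin.castLE _ t) = 0
    have htv : (Fin.castLE (by omega : k+1 ≤ 2*m+1) t).val = t.val := rfl
    have htl : t.val < k + 1 := t.isLt
    unfold nbM
    rw [if_neg hi.2]
    by_cases he : i.val % 2 = 0
    · rw [if_pos he]
      rw [if_neg (by omega)]
    · rw [if_neg he]
      rw [if_neg (by omega), if_neg (by omega)]
  have h2 : π '' (nbM m '' (B : Set (Fin (4*m+2))))
      ⊆ insert 0 ((fun i => π (nbM m i)) '' (S : Set (Fin (4*m+2)))) := by
    rintro y ⟨-, ⟨i, hiB, rfl⟩, rfl⟩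
    by_cases hiS : i ∈ S
    · exact Set.mem_insert_of_mem _ ⟨i, hiS, rfl⟩
    · rw [hzero i hiB hiS]
      exact Set.mem_insert _ _
  have h4 : Submodule.span ℝ ((fun i => π (nbM m i)) '' (S : Set (Fin (4*m+2)))) = ⊤ := by
    refine le_antisymm le_top ?_
    rw [← Submodule.span_insert_zero]
    exact h1 ▸ Submodule.span_mono h2
  have h5 : ((fun i => π (nbM m i)) '' (S : Set (Fin (4*m+2))))
      = ((S.image (fun i => π (nbM m i)) : Finset (Fin (k+1) → ℝ)) : Set (Fin (k+1) → ℝ)) := by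
    simp [Finset.coe_image]
  calc k+1 = Module.finrank ℝ (Fin (k+1) → ℝ) := by
        simp [Module.finrank_fintype_fun_eq_card]
    _ = Module.finrank ℝ (Submodule.span ℝ ((fun i => π (nbM m i)) '' (S : Set (Fin (4*m+2))))) := by
        rw [h4, finrank_top]
    _ ≤ (S.image (fun i => π (nbM m i))).card := by
        rw [h5]; exact finrank_span_finset_le_card _
    _ ≤ S.card := Finset.card_image_le

end aux

lemma choose_min (m k : ℕ) (hk : k ≤ 2*m) (Q : ℕ → Prop)
    (hex : ∃ v ∈ priority m k, Q v) :
    ∃ v ∈ priority m k, Q v ∧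
      (∀ w ∈ priority m k, Q w → (priority m k).idxOf v ≤ (priority m k).idxOf w) ∧
      (Q (2*k) → v = 2*k ∨ (k ≠ 0 ∧ v = 2*k-1)) ∧
      (k ≠ 0 → Q (2*k-1) → v = 2*k-1) ∧
      (Q (2*k+1) → v = 2*k ∨ v = 2*k+1 ∨ (k ≠ 0 ∧ v = 2*k-1)) := by
  classical
  rcases Nat.eq_zero_or_pos k with hk0 | hk0
  · subst hk0
    have hp : priority m 0 = [0, 1, 4*m+1] := rfl
    rw [hp] at hex ⊢
    by_cases h0 : Q 0
    · refine ⟨0, by simp, h0, ?_, fun _ => Or.inl rfl, fun h => absurd rfl h,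
        fun _ => Or.inl rfl⟩
      intro w _ _
      rw [List.idxOf_cons_self]
      exact Nat.zero_le _
    · by_cases h1 : Q 1
      · refine ⟨1, by simp, h1, ?_, fun h => absurd h h0, fun h => absurd rfl h,
          fun _ => Or.inr (Or.inl rfl)⟩
        intro w hw hQw
        have hw0 : w ≠ 0 := fun h => h0 (h ▸ hQw)
        rw [List.idxOf_cons_ne _ (Ne.symm hw0),
          List.idxOf_cons_ne _ (by omega : (0:ℕ) ≠ 1), List.idxOf_cons_self]
        exact Nat.succ_le_succ (Nat.zero_le _)
      · obtain ⟨v, hv, hQv⟩ := hex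
        simp only [List.mem_cons, List.not_mem_nil, or_false] at hv
        have hv41 : v = 4*m+1 := by
          rcases hv with rfl | rfl | rfl
          · exact absurd hQv h0
          · exact absurd hQv h1
          · rfl
        subst hv41
        refine ⟨4*m+1, by simp, hQv, ?_, fun h => absurd h h0, fun h => absurd rfl h,
          fun h => absurd h h1⟩
        intro w hw hQw
        simp only [List.mem_cons, List.not_mem_nil, or_false] at hw
        rcases hw with rfl | rfl | rfl
        · exact absurd hQw h0
        · exact absurd hQw h1
        · exact le_refl _
  · have hkne : k ≠ 0 := by omega
    have hp : priority m k = [2*k-1, 2*k, 2*k+1, 4*m+1] := by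
      unfold priority; rw [if_neg hkne]
    rw [hp] at hex ⊢
    have e1 : 2*k-1 ≠ 2*k := by omega
    have e2 : 2*k-1 ≠ 2*k+1 := by omega
    have e3 : 2*k ≠ 2*k+1 := by omega
    by_cases hA : Q (2*k-1)
    · refine ⟨2*k-1, by simp, hA, ?_, fun _ => Or.inr ⟨hkne, rfl⟩, fun _ _ => rfl,
        fun _ => Or.inr (Or.inr ⟨hkne, rfl⟩)⟩
      intro w _ _
      rw [List.idxOf_cons_self]
      exact Nat.zero_le _
    · by_cases hB : Q (2*k)
      · refine ⟨2*k, by simp, hB, ?_, fun _ => Or.inl rfl, fun _ h => absurd h hA,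
          fun _ => Or.inl rfl⟩
        intro w hw hQw
        have hw1 : w ≠ 2*k-1 := fun h => hA (h ▸ hQw)
        rw [List.idxOf_cons_ne _ (Ne.symm hw1), List.idxOf_cons_ne _ e1,
          List.idxOf_cons_self]
        exact Nat.succ_le_succ (Nat.zero_le _)
      · by_cases hC : Q (2*k+1)
        · refine ⟨2*k+1, by simp, hC, ?_, fun h => absurd h hB, fun _ h => absurd h hA,
            fun _ => Or.inr (Or.inl rfl)⟩
          intro w hw hQw
          have hw1 : w ≠ 2*k-1 := fun h => hA (h ▸ hQw)
          have hw2 : w ≠ 2*k := fun h => hB (h ▸ hQw)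
          rw [List.idxOf_cons_ne _ (Ne.symm hw1), List.idxOf_cons_ne _ (Ne.symm hw2),
            List.idxOf_cons_ne _ e2, List.idxOf_cons_ne _ e3, List.idxOf_cons_self]
          omega
        · obtain ⟨v, hv, hQv⟩ := hex
          simp only [List.mem_cons, List.not_mem_nil, or_false] at hv
          have hv41 : v = 4*m+1 := by
            rcases hv with rfl | rfl | rfl | rfl
            · exact absurd hQv hA
            · exact absurd hQv hB
            · exact absurd hQv hC
            · rfl
          subst hv41
          refine ⟨4*m+1, by simp, hQv, ?_, fun h => absurd h hB, fun _ h => absurd h hA,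
            fun h => absurd h hC⟩
          intro w hw hQw
          simp only [List.mem_cons, List.not_mem_nil, or_false] at hw
          rcases hw with rfl | rfl | rfl | rfl
          · exact absurd hQw hA
          · exact absurd hQw hB
          · exact absurd hQw hC
          · exact le_refl _

/-- the greedy enumeration procedure succeeds in exhausting any basis
`B ⊆ M` of `ℝ^{2m+1}`. -/
theorem stmt14 (m : ℕ) (B : Finset (Fin (4*m+2)))
    (hindep : LinearIndependent ℝ (fun i : {i // i ∈ B} => nbM m i))
    (hspan : Submodule.span ℝ (nbM m '' (B : Set (Fin (4*m+2)))) = ⊤) :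
    ∃ g : Fin (2*m+1) → Fin (4*m+2),
      Function.Injective g ∧
      (∀ r, g r ∈ B) ∧ (∀ b ∈ B, ∃ r, g r = b) ∧
      ∀ r : Fin (2*m+1),
        (g r).val ∈ priority m r.val ∧
        ∀ v ∈ priority m r.val,
          (∃ b ∈ B, b.val = v ∧ ∀ r' : Fin (2*m+1), r' < r → g r' ≠ b) →
          List.idxOf (g r).val (priority m r.val) ≤ List.idxOf v (priority m r.val) := by

  classical
  have main : ∀ k, k ≤ 2*m+1 → ∃ l : List (Fin (4*m+2)),
      l.length = k ∧ l.Nodup ∧ (∀ x ∈ l, x ∈ B) ∧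
      (∀ x ∈ l, x.val < 2*k ∨ x.val = 4*m+1) ∧
      (∀ i ∈ B, i.val + 2 ≤ 2*k → i ∈ l) ∧
      (∀ r (hr : r < l.length), (l[r]'hr).val ∈ priority m r ∧
        ∀ v ∈ priority m r,
          (∃ b ∈ B, b.val = v ∧ ∀ r' (hr' : r' < r), l[r']'(Nat.lt_trans hr' hr) ≠ b) →
          (priority m r).idxOf (l[r]'hr).val ≤ (priority m r).idxOf v) ∧
      ((∃ b ∈ B, b.val + 1 = 2*k ∧ b ∉ l) →
        (fun τ : Fin (2*m+1) => if τ.val = k then (1:ℝ) else 0) ∈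
          Submodule.span ℝ (nbM m '' {i : Fin (4*m+2) | i ∈ B ∧ i.val < 2*k})) := by
    intro k
    induction k with
    | zero =>
      intro _
      refine ⟨[], rfl, List.nodup_nil, by simp, by simp, by simp, by simp, ?_⟩
      rintro ⟨b, -, h, -⟩
      omega
    | succ k ih =>
      intro hk1
      obtain ⟨l, hlen, hnd, hmB, hbd, hcov, hgre, hE⟩ := ih (by omega)
      have hkm : k ≤ 2*m := by omega
      -- availability
      have hexv : ∃ v ∈ priority m k, ∃ b ∈ B, b.val = v ∧ b ∉ l := by
        have hS := avail_aux hspan k hkm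
        set S := B.filter (fun i => i.val ≤ 2*k+1 ∨ i.val = 4*m+1) with hSdef
        have hsub : l.toFinset ⊆ S := by
          intro x hx
          rw [List.mem_toFinset] at hx
          refine Finset.mem_filter.mpr ⟨hmB x hx, ?_⟩
          rcases hbd x hx with h | h
          · exact Or.inl (by omega)
          · exact Or.inr h
        have hcard : l.toFinset.card = k := by
          rw [List.toFinset_card_of_nodup hnd, hlen]
        obtain ⟨x, hxS, hxl⟩ : ∃ x ∈ S, x ∉ l.toFinset := by
          by_contra hcon
          push_neg at hcon
          have hsub2 : S ⊆ l.toFinset := fun x hx => hcon x hx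
          have := Finset.card_le_card hsub2
          omega
        rw [List.mem_toFinset] at hxl
        obtain ⟨hxB, hxv⟩ := Finset.mem_filter.mp hxS
        have hxge : ¬ (x.val + 2 ≤ 2*k) := fun h => hxl (hcov x hxB h)
        refine ⟨x.val, ?_, x, hxB, rfl, hxl⟩
        by_cases hk0 : k = 0
        · subst hk0
          have hp : priority m 0 = [0, 1, 4*m+1] := rfl
          rw [hp]
          simp only [List.mem_cons, List.not_mem_nil, or_false]
          omega
        · have hp : priority m k = [2*k-1, 2*k, 2*k+1, 4*m+1] := by
            unfold priority; rw [if_neg hk0]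
          rw [hp]
          simp only [List.mem_cons, List.not_mem_nil, or_false]
          omega
      obtain ⟨v, hvp, ⟨b, hbB, hbv, hbl⟩, hmin, hQ2k, hQ2k1m, hQ2k1p⟩ :=
        choose_min m k hkm (fun v => ∃ b ∈ B, b.val = v ∧ b ∉ l) hexv
      have hvb : v ≤ 2*k+1 ∨ v = 4*m+1 := by
        by_cases hk0 : k = 0
        · subst hk0
          have hp : priority m 0 = [0, 1, 4*m+1] := rfl
          rw [hp] at hvp
          simp only [List.mem_cons, List.not_mem_nil, or_false] at hvp
          omega
        · have hp : priority m k = [2*k-1, 2*k, 2*k+1, 4*m+1] := by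
            unfold priority; rw [if_neg hk0]
          rw [hp] at hvp
          simp only [List.mem_cons, List.not_mem_nil, or_false] at hvp
          omega
      have hlen' : (l ++ [b]).length = k + 1 := by simp [hlen]
      have hget : ∀ (j : ℕ) (hj : j < l.length),
          (l ++ [b])[j]'(by rw [List.length_append]; omega) = l[j]'hj := fun j hj =>
        List.getElem_append_left hj
      have hgetb : (l ++ [b])[k]'(by rw [hlen']; omega) = b :=
        List.getElem_concat_length hlen.symm (by rw [hlen']; omega)
      refine ⟨l ++ [b], hlen', ?_, ?_, ?_, ?_, ?_, ?_⟩
      · exact List.Nodup.append hnd (List.nodup_singleton b)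
          (by simp [List.disjoint_singleton, hbl])
      · intro x hx
        rcases List.mem_append.mp hx with h | h
        · exact hmB x h
        · rw [List.mem_singleton] at h; exact h ▸ hbB
      · intro x hx
        rcases List.mem_append.mp hx with h | h
        · rcases hbd x h with h' | h'
          · exact Or.inl (by omega)
          · exact Or.inr h'
        · rw [List.mem_singleton] at h
          subst h
          rw [hbv]
          rcases hvb with h' | h'
          · exact Or.inl (by omega)
          · exact Or.inr h'
      · -- coverage
        intro i hiB hile
        by_contra hicon
        have hinl : i ∉ l := fun h => hicon (List.mem_append_left _ h)
        have hinb : i ≠ b := fun h => hicon (List.mem_append_right _ (by simp [h]))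
        have hnot : ¬ (i.val + 2 ≤ 2*k) := fun h => hicon (List.mem_append_left _ (hcov i hiB h))
        rcases (by omega : i.val = 2*k ∨ (k ≠ 0 ∧ i.val = 2*k-1)) with hi2k | ⟨hk0, hi2k1⟩
        · rcases hQ2k ⟨i, hiB, hi2k, hinl⟩ with hveq | ⟨hk0, hveq⟩
          · exact hinb (Fin.val_injective (by omega : i.val = b.val))
          · have hEc := hE ⟨b, hbB, by omega, hbl⟩
            have hns := not_mem_span_lt hindep (2*k) i hiB (by omega)
            rw [nbM_even i k hi2k] at hns
            exact hns hEc
        · have hveq := hQ2k1m hk0 ⟨i, hiB, hi2k1, hinl⟩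
          exact hinb (Fin.val_injective (by omega : i.val = b.val))
      · -- greedy condition
        intro r hr
        rw [hlen'] at hr
        by_cases hrk : r < k
        · have hrl : r < l.length := by omega
          obtain ⟨hg1, hg2⟩ := hgre r hrl
          rw [hget r hrl]
          refine ⟨hg1, ?_⟩
          intro v' hv' ⟨b', hb'B, hb'v, hb'not⟩
          refine hg2 v' hv' ⟨b', hb'B, hb'v, ?_⟩
          intro r' hr'
          have := hb'not r' hr'
          rwa [hget r' (by omega)] at this
        · have hrk' : r = k := by omega
          subst hrk'
          rw [hgetb]
          refine ⟨hbv ▸ hvp, ?_⟩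
          intro v' hv' ⟨b', hb'B, hb'v, hb'not⟩
          rw [hbv]
          refine hmin v' hv' ⟨b', hb'B, hb'v, ?_⟩
          intro hb'l
          obtain ⟨j, hj, hje⟩ := List.mem_iff_getElem.mp hb'l
          exact hb'not j (by omega) ((hget j hj).trans hje)
      · -- invariant (E)
        rintro ⟨b', hb'B, hb'val, hb'nl'⟩
        have hb'v : b'.val = 2*k+1 := by omega
        have hb'nl : b' ∉ l := fun h => hb'nl' (List.mem_append_left _ h)
        have hb'ne : b' ≠ b := fun h => hb'nl' (List.mem_append_right _ (by simp [h]))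
        by_cases hk2m : k = 2*m
        · have hzero : (fun τ : Fin (2*m+1) => if τ.val = k+1 then (1:ℝ) else 0)
              = (0 : Fin (2*m+1) → ℝ) := by
            funext τ
            have := τ.isLt
            rw [if_neg (by omega)]
            rfl
          rw [hzero]
          exact Submodule.zero_mem _
        · have hklt : k < 2*m := by omega
          rcases hQ2k1p ⟨b', hb'B, hb'v, hb'nl⟩ with hveq | hveq | ⟨hk0, hveq⟩
          · have hbval : b.val = 2*k := hbv.trans hveq
            have heq : (fun τ : Fin (2*m+1) => if τ.val = k+1 then (1:ℝ) else 0)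
                = nbM m b - nbM m b' := by
              rw [nbM_even b k hbval, nbM_odd b' k hb'v hklt]
              funext τ
              simp only [Pi.sub_apply]
              by_cases h1 : τ.val = k
              · rw [if_pos h1, if_pos h1, if_neg (by omega)]; ring
              · rw [if_neg h1, if_neg h1]
                by_cases h2 : τ.val = k+1
                · rw [if_pos h2, if_pos h2]; ring
                · rw [if_neg h2, if_neg h2]; ring
            rw [heq]
            exact Submodule.sub_mem _
              (Submodule.subset_span ⟨b, ⟨hbB, by omega⟩, rfl⟩)
              (Submodule.subset_span ⟨b', ⟨hb'B, by omega⟩, rfl⟩)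
          · exact absurd (Fin.val_injective (by omega : b'.val = b.val)) hb'ne
          · have hbval : b.val = 2*k-1 := hbv.trans hveq
            have hEc := hE ⟨b, hbB, by omega, hbl⟩
            have heq : (fun τ : Fin (2*m+1) => if τ.val = k+1 then (1:ℝ) else 0)
                = (fun τ : Fin (2*m+1) => if τ.val = k then (1:ℝ) else 0) - nbM m b' := by
              rw [nbM_odd b' k hb'v hklt]
              funext τ
              simp only [Pi.sub_apply]
              by_cases h1 : τ.val = k
              · rw [if_pos h1, if_pos h1, if_neg (by omega)]; ring
              · rw [if_neg h1, if_neg h1]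
                by_cases h2 : τ.val = k+1
                · rw [if_pos h2, if_pos h2]; ring
                · rw [if_neg h2, if_neg h2]; ring
            rw [heq]
            refine Submodule.sub_mem _ ?_
              (Submodule.subset_span ⟨b', ⟨hb'B, by omega⟩, rfl⟩)
            refine Submodule.span_mono ?_ hEc
            refine Set.image_mono ?_
            rintro y ⟨hy1, hy2⟩
            exact ⟨hy1, by omega⟩
  -- assemble
  obtain ⟨l, hlen, hnd, hmB, hbd, hcov, hgre, hE⟩ := main (2*m+1) le_rfl
  have hBcard := card_le_aux hindep
  have hlB : l.toFinset ⊆ B := fun x hx => hmB x (List.mem_toFinset.mp hx)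
  have hlcard : l.toFinset.card = 2*m+1 := by
    rw [List.toFinset_card_of_nodup hnd, hlen]
  have hBl : ∀ x ∈ B, x ∈ l := by
    intro x hx
    have : l.toFinset = B := Finset.eq_of_subset_of_card_le hlB (by omega)
    rw [← this] at hx
    exact List.mem_toFinset.mp hx
  refine ⟨fun r => l[r.val]'(by rw [hlen]; exact r.isLt), ?_, ?_, ?_, ?_⟩
  · intro r1 r2 h
    have := (List.Nodup.getElem_inj_iff hnd).mp h
    exact Fin.ext this
  · intro r
    exact hmB _ (List.getElem_mem _)
  · intro x hx
    obtain ⟨j, hj, hje⟩ := List.mem_iff_getElem.mp (hBl x hx)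
    exact ⟨⟨j, by omega⟩, hje⟩
  · intro r
    obtain ⟨hg1, hg2⟩ := hgre r.val (by rw [hlen]; exact r.isLt)
    refine ⟨hg1, ?_⟩
    intro v hv ⟨b', hb'B, hb'v, hb'not⟩
    refine hg2 v hv ⟨b', hb'B, hb'v, ?_⟩
    intro r' hr'
    exact hb'not ⟨r', by omega⟩ hr'
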